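/- Fix integers n ≥ 3 and d ≥ 3, and nonzero complex numbers c_2, …, c_{n-1}. Let g_0 = x_1^{d-1} + (x_3^d + ⋯ + x_{n-1}^d) + (c_2·x_2 + ⋯ + c_{n-1}·x_{n-1})^d in ℂ[x_1, …, x_{n-1}] (the sum x_3^d + ⋯ + x_{n-1}^d is empty when n = 3). Let J(g_0) be the ideal of ℂ[x_1, …, x_{n-1}] generated by the partial derivatives ∂g_0/∂x_1, …, ∂g_0/∂x_{n-1}. Then the quotient ring ℂ[x_1, …, x_{n-1}]/J(g_0) is a finite-dimensional ℂ-vector space of dimension (d−1)^{n-1} − (d−1)^{n-2}. -/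

import Mathlib

open MvPolynomial

lemma mono_mem {m : ℕ} (k : Fin m → ℕ) (a : Fin m →₀ ℕ) (r : ℂ) (i : Fin m) (h : k i ≤ a i) :
    monomial a r ∈ Ideal.span (Set.range fun i : Fin m => (X i : MvPolynomial (Fin m) ℂ) ^ k i) := by
  have : (monomial a r : MvPolynomial (Fin m) ℂ)
      = monomial (a - Finsupp.single i (k i)) r * X i ^ k i := by
    rw [X_pow_eq_monomial, monomial_mul, mul_one,
      tsub_add_cancel_of_le (Finsupp.single_le_iff.mpr h)]
  rw [this]
  exact Ideal.mul_mem_left _ _ (Ideal.subset_span ⟨i, rfl⟩)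

lemma coeff_zero_of_mem {m : ℕ} (k : Fin m → ℕ) (p : MvPolynomial (Fin m) ℂ)
    (hp : p ∈ Ideal.span (Set.range fun i : Fin m => (X i : MvPolynomial (Fin m) ℂ) ^ k i))
    (v : Fin m →₀ ℕ) (hv : ∀ i, v i < k i) : coeff v p = 0 := by
  rw [Ideal.mem_span_range_iff_exists_fun] at hp
  obtain ⟨f, rfl⟩ := hp
  rw [coeff_sum]
  refine Finset.sum_eq_zero fun i _ => ?_
  rw [X_pow_eq_monomial, coeff_mul_monomial', if_neg]
  intro h
  exact absurd (Finsupp.single_le_iff.mp h) (not_le.mpr (hv i))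

noncomputable section

def smallEquiv {m : ℕ} (k : Fin m → ℕ) :
    {a : Fin m →₀ ℕ // ∀ i, a i < k i} ≃ (∀ i, Fin (k i)) where
  toFun a i := ⟨a.1 i, a.2 i⟩
  invFun f := ⟨Finsupp.equivFunOnFinite.symm (fun i => (f i : ℕ)), fun i => by
    simpa using (f i).2⟩
  left_inv a := by ext i; simp
  right_inv f := by ext i; simp

instance smallFintype {m : ℕ} (k : Fin m → ℕ) :
    Fintype {a : Fin m →₀ ℕ // ∀ i, a i < k i} :=
  Fintype.ofEquiv _ (smallEquiv k).symm

lemma quot_dim {m : ℕ} (k : Fin m → ℕ) :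
    FiniteDimensional ℂ (MvPolynomial (Fin m) ℂ ⧸
        Ideal.span (Set.range fun i : Fin m => (X i : MvPolynomial (Fin m) ℂ) ^ k i)) ∧
    Module.finrank ℂ (MvPolynomial (Fin m) ℂ ⧸
        Ideal.span (Set.range fun i : Fin m => (X i : MvPolynomial (Fin m) ℂ) ^ k i))
      = ∏ i, k i := by
  set I := Ideal.span (Set.range fun i : Fin m => (X i : MvPolynomial (Fin m) ℂ) ^ k i) with hI
  set q : MvPolynomial (Fin m) ℂ →ₗ[ℂ] (MvPolynomial (Fin m) ℂ ⧸ I) :=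
    (Ideal.Quotient.mkₐ ℂ I).toLinearMap with hq
  set b : {a : Fin m →₀ ℕ // ∀ i, a i < k i} → (MvPolynomial (Fin m) ℂ ⧸ I) :=
    fun a => q (monomial a.1 1) with hb
  have hspan : ⊤ ≤ Submodule.span ℂ (Set.range b) := by
    rintro x -
    obtain ⟨p, rfl⟩ := Ideal.Quotient.mkₐ_surjective ℂ I x
    show q p ∈ _
    rw [← support_sum_monomial_coeff p, map_sum]
    refine Submodule.sum_mem _ fun a _ => ?_
    by_cases ha : ∀ i, a i < k i
    · have : (monomial a (coeff a p) : MvPolynomial (Fin m) ℂ)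
          = coeff a p • monomial a 1 := by
        rw [smul_monomial, smul_eq_mul, mul_one]
      rw [this, map_smul]
      exact Submodule.smul_mem _ _ (Submodule.subset_span ⟨⟨a, ha⟩, rfl⟩)
    · push_neg at ha
      obtain ⟨i, hi⟩ := ha
      have : q (monomial a (coeff a p)) = 0 :=
        Ideal.Quotient.eq_zero_iff_mem.mpr (mono_mem k a (coeff a p) i hi)
      rw [this]; exact Submodule.zero_mem _
  have hli : LinearIndependent ℂ b := by
    rw [linearIndependent_iff']
    intro s g hsum a ha
    have hmem : (∑ x ∈ s, monomial x.1 (g x) : MvPolynomial (Fin m) ℂ) ∈ I := by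
      refine Ideal.Quotient.eq_zero_iff_mem.mp ?_
      have hqq : q (∑ x ∈ s, monomial x.1 (g x)) =
          ∑ x ∈ s, g x • b x := by
        rw [map_sum]
        refine Finset.sum_congr rfl fun x _ => ?_
        have : (monomial x.1 (g x) : MvPolynomial (Fin m) ℂ) = g x • monomial x.1 1 := by
          rw [smul_monomial, smul_eq_mul, mul_one]
        rw [this, map_smul]
      have h0 : q (∑ x ∈ s, monomial x.1 (g x)) = 0 := by rw [hqq, hsum]
      exact h0
    have := coeff_zero_of_mem k _ hmem a.1 a.2
    rw [coeff_sum] at this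
    rw [Finset.sum_eq_single a] at this
    · simpa using this
    · intro x hx hxa
      rw [coeff_monomial, if_neg]
      exact fun h => hxa (Subtype.ext h)
    · intro h; exact absurd ha h
  have hB : Module.Basis {a : Fin m →₀ ℕ // ∀ i, a i < k i} ℂ (MvPolynomial (Fin m) ℂ ⧸ I) :=
    Module.Basis.mk hli hspan
  have hfin : FiniteDimensional ℂ (MvPolynomial (Fin m) ℂ ⧸ I) :=
    Module.Finite.of_basis hB
  refine ⟨hfin, ?_⟩
  rw [Module.finrank_eq_card_basis hB, Fintype.card_congr (smallEquiv k)]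
  simp [Fintype.card_pi]

end

/-- The Milnor algebra of the principal part
`g₀ = x₁^{d-1} + (x₃^d + ⋯ + x_{n-1}^d) + (c₂x₂ + ⋯ + c_{n-1}x_{n-1})^d` is a
finite-dimensional complex vector space of dimension `(d-1)^{n-1} - (d-1)^{n-2}`. -/
theorem stmt_5 (n d : ℕ) (hn : 3 ≤ n) (hd : 3 ≤ d)
    (c : Fin (n - 1) → ℂ) (hc : ∀ i : Fin (n - 1), 1 ≤ (i : ℕ) → c i ≠ 0)
    (g₀ : MvPolynomial (Fin (n - 1)) ℂ)
    (hg : g₀ = X (⟨0, by omega⟩ : Fin (n - 1)) ^ (d - 1) +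
        ∑ i ∈ Finset.univ.filter (fun i : Fin (n - 1) => 2 ≤ (i : ℕ)), X i ^ d +
        (∑ i ∈ Finset.univ.filter (fun i : Fin (n - 1) => 1 ≤ (i : ℕ)), C (c i) * X i) ^ d)
    (J : Ideal (MvPolynomial (Fin (n - 1)) ℂ))
    (hJ : J = Ideal.span (Set.range fun i : Fin (n - 1) => pderiv i g₀)) :
    FiniteDimensional ℂ (MvPolynomial (Fin (n - 1)) ℂ ⧸ J) ∧
      Module.finrank ℂ (MvPolynomial (Fin (n - 1)) ℂ ⧸ J) =
        (d - 1) ^ (n - 1) - (d - 1) ^ (n - 2) := by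
  have hm : 2 ≤ n - 1 := by omega
  set i0 : Fin (n - 1) := ⟨0, by omega⟩ with hi0
  set i1 : Fin (n - 1) := ⟨1, by omega⟩ with hi1
  have hne01 : i0 ≠ i1 := by simp [hi0, hi1, Fin.ext_iff]
  set L : (MvPolynomial (Fin (n - 1)) ℂ) := ∑ i ∈ Finset.univ.filter (fun i : Fin (n - 1) => 1 ≤ (i : ℕ)), C (c i) * X i
    with hL
  set S2 : (MvPolynomial (Fin (n - 1)) ℂ) := ∑ i ∈ Finset.univ.filter (fun i : Fin (n - 1) => 2 ≤ (i : ℕ)), C (c i) * X i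
    with hS2
  have hc1 : c i1 ≠ 0 := hc i1 (by simp [hi1])
  have hset : Finset.univ.filter (fun i : Fin (n - 1) => 1 ≤ (i : ℕ)) =
      insert i1 (Finset.univ.filter (fun i : Fin (n - 1) => 2 ≤ (i : ℕ))) := by
    ext j
    simp only [Finset.mem_filter, Finset.mem_univ, true_and, Finset.mem_insert, Fin.ext_iff,
      hi1]
    omega
  have hi1notin : i1 ∉ Finset.univ.filter (fun i : Fin (n - 1) => 2 ≤ (i : ℕ)) := by
    simp [hi1]
  have hLsplit : L = C (c i1) * X i1 + S2 := by
    rw [hL, hset, Finset.sum_insert hi1notin, hS2]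
  -- substitution maps
  set u : Fin (n - 1) → (MvPolynomial (Fin (n - 1)) ℂ) := fun j => if j = i1 then L else X j with hu
  set v : Fin (n - 1) → (MvPolynomial (Fin (n - 1)) ℂ) := fun j =>
    if j = i1 then C (c i1)⁻¹ * (X i1 - S2) else X j with hv
  have haevalS2u : aeval u S2 = S2 := by
    rw [hS2, map_sum]
    refine Finset.sum_congr rfl fun i hi => ?_
    have hii1 : i ≠ i1 := by
      rintro rfl; exact hi1notin hi
    simp [hu, hii1, algebraMap_eq]
  have haevalLv : aeval v L = X i1 := by
    rw [hLsplit, map_add, map_mul, aeval_C, aeval_X]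
    have h2 : aeval v S2 = S2 := by
      rw [hS2, map_sum]
      refine Finset.sum_congr rfl fun i hi => ?_
      have hii1 : i ≠ i1 := by rintro rfl; exact hi1notin hi
      simp [hv, hii1, algebraMap_eq]
    have h3 : v i1 = C (c i1)⁻¹ * (X i1 - S2) := by simp [hv]
    rw [h2, h3, algebraMap_eq, ← mul_assoc, ← C_mul, mul_inv_cancel₀ hc1, C_1, one_mul,
      sub_add_cancel]
  have h1 : (aeval u).comp (aeval v) = AlgHom.id ℂ (MvPolynomial (Fin (n - 1)) ℂ) := by
    apply MvPolynomial.algHom_ext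
    intro j
    rw [AlgHom.comp_apply, aeval_X, AlgHom.id_apply]
    by_cases hj : j = i1
    · subst hj
      have : v i1 = C (c i1)⁻¹ * (X i1 - S2) := by simp [hv]
      rw [this, map_mul, map_sub, aeval_C, aeval_X, haevalS2u]
      have hui1 : u i1 = L := by simp [hu]
      rw [hui1, hLsplit, add_sub_cancel_right, algebraMap_eq, ← mul_assoc, ← C_mul,
        inv_mul_cancel₀ hc1, C_1, one_mul]
    · have : v j = X j := by simp [hv, hj]
      rw [this, aeval_X]
      simp [hu, hj]
  have h2 : (aeval v).comp (aeval u) = AlgHom.id ℂ (MvPolynomial (Fin (n - 1)) ℂ) := by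
    apply MvPolynomial.algHom_ext
    intro j
    rw [AlgHom.comp_apply, aeval_X, AlgHom.id_apply]
    by_cases hj : j = i1
    · subst hj
      have : u i1 = L := by simp [hu]
      rw [this, haevalLv]
    · have : u j = X j := by simp [hu, hj]
      rw [this, aeval_X]
      simp [hv, hj]
  obtain ⟨ψ, hψ⟩ : ∃ ψ : (MvPolynomial (Fin (n - 1)) ℂ) ≃ₐ[ℂ] (MvPolynomial (Fin (n - 1)) ℂ), ∀ p : (MvPolynomial (Fin (n - 1)) ℂ), ψ p = aeval u p :=
    ⟨AlgEquiv.ofAlgHom (aeval u) (aeval v) h1 h2, fun p => rfl⟩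
  set k : Fin (n - 1) → ℕ := fun i => if (i : ℕ) = 0 then d - 2 else d - 1 with hk
  -- derivative computations
  have hdXpow : ∀ (j i : Fin (n - 1)) (e : ℕ),
      pderiv j ((X i : MvPolynomial (Fin (n - 1)) ℂ) ^ e) =
      if j = i then (e : MvPolynomial (Fin (n - 1)) ℂ) * X i ^ (e - 1) else 0 := by
    intro j i e
    rw [pderiv_pow]
    by_cases h : j = i
    · subst h; rw [pderiv_X_self, mul_one, if_pos rfl]
    · rw [pderiv_X_of_ne (Ne.symm h), mul_zero, if_neg h]
  have hdL : ∀ j : Fin (n - 1), pderiv j L = if 1 ≤ (j : ℕ) then C (c j) else 0 := by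
    intro j
    rw [hL, map_sum]
    have hterm : ∀ i ∈ Finset.univ.filter (fun i : Fin (n - 1) => 1 ≤ (i : ℕ)),
        pderiv j (C (c i) * X i) = if j = i then C (c i) else 0 := by
      intro i _
      rw [pderiv_C_mul]
      by_cases h : j = i
      · subst h; rw [pderiv_X_self, mul_one, if_pos rfl]
      · rw [pderiv_X_of_ne (Ne.symm h), mul_zero, if_neg h]
    rw [Finset.sum_congr rfl hterm, Finset.sum_ite_eq]
    simp
  have hdS : ∀ j : Fin (n - 1),
      pderiv j (∑ i ∈ Finset.univ.filter (fun i : Fin (n - 1) => 2 ≤ (i : ℕ)),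
        (X i : MvPolynomial (Fin (n - 1)) ℂ) ^ d)
      = if 2 ≤ (j : ℕ) then (d : MvPolynomial (Fin (n - 1)) ℂ) * X j ^ (d - 1) else 0 := by
    intro j
    rw [map_sum]
    rw [Finset.sum_congr rfl (fun i _ => hdXpow j i d), Finset.sum_ite_eq]
    simp
  have hval0 : (i0 : ℕ) = 0 := rfl
  have hval1 : (i1 : ℕ) = 1 := rfl
  have hD0 : pderiv i0 g₀ = ((d - 1 : ℕ) : MvPolynomial (Fin (n - 1)) ℂ) * X i0 ^ (d - 2) := by
    rw [hg, map_add, map_add, hdXpow, hdS, pderiv_pow, hdL]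
    have h11 : d - 1 - 1 = d - 2 := by omega
    rw [if_pos rfl, if_neg (by rw [hval0]; omega), if_neg (by rw [hval0]; omega), h11]
    ring
  have hD1 : pderiv i1 g₀ = C ((d : ℂ) * c i1) * L ^ (d - 1) := by
    rw [hg, map_add, map_add, hdXpow, hdS, pderiv_pow, hdL]
    rw [if_neg (Ne.symm hne01), if_neg (by rw [hval1]; omega), if_pos (by rw [hval1])]
    rw [map_mul, map_natCast]
    ring
  have hD2 : ∀ j : Fin (n - 1), 2 ≤ (j : ℕ) →
      pderiv j g₀ = (d : MvPolynomial (Fin (n - 1)) ℂ) * X j ^ (d - 1) +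
        C ((d : ℂ) * c j) * L ^ (d - 1) := by
    intro j hj
    rw [hg, map_add, map_add, hdXpow, hdS, pderiv_pow, hdL]
    rw [if_neg (by rw [Fin.ext_iff, hval0]; omega), if_pos hj, if_pos (by omega)]
    rw [map_mul, map_natCast]
    ring
  -- the target monomial-generated set
  set T : Set (MvPolynomial (Fin (n - 1)) ℂ) :=
    Set.range fun i : Fin (n - 1) => u i ^ k i with hT
  have hgen0 : u i0 ^ k i0 = X i0 ^ (d - 2) := by
    simp [hu, hk, hne01, hval0]
  have hgen1 : u i1 ^ k i1 = L ^ (d - 1) := by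
    simp [hu, hk, hval1]
  have hgenj : ∀ j : Fin (n - 1), 2 ≤ (j : ℕ) → u j ^ k j = X j ^ (d - 1) := by
    intro j hj
    have h1 : j ≠ i1 := by rw [Fin.ne_iff_vne, hval1]; omega
    have h0 : (j : ℕ) ≠ 0 := by omega
    simp [hu, hk, h1, h0]
  have hT0 : (X i0 : MvPolynomial (Fin (n - 1)) ℂ) ^ (d - 2) ∈ Ideal.span T :=
    Ideal.subset_span ⟨i0, hgen0⟩
  have hT1 : L ^ (d - 1) ∈ Ideal.span T := Ideal.subset_span ⟨i1, hgen1⟩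
  have hTj : ∀ j : Fin (n - 1), 2 ≤ (j : ℕ) →
      (X j : MvPolynomial (Fin (n - 1)) ℂ) ^ (d - 1) ∈ Ideal.span T :=
    fun j hj => Ideal.subset_span ⟨j, hgenj j hj⟩
  -- nonzero constants
  have hcd : (d : ℂ) ≠ 0 := Nat.cast_ne_zero.mpr (by omega)
  have hcd1 : ((d - 1 : ℕ) : ℂ) ≠ 0 := Nat.cast_ne_zero.mpr (by omega)
  -- membership of generators in J
  have hJL : L ^ (d - 1) ∈ J := by
    have hne : (d : ℂ) * c i1 ≠ 0 := mul_ne_zero hcd hc1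
    have he : C (((d : ℂ) * c i1)⁻¹) * pderiv i1 g₀ = L ^ (d - 1) := by
      rw [hD1, ← mul_assoc, ← C_mul, inv_mul_cancel₀ hne, C_1, one_mul]
    rw [← he]
    exact Ideal.mul_mem_left _ _ (by rw [hJ]; exact Ideal.subset_span ⟨i1, rfl⟩)
  have hJ0 : (X i0 : MvPolynomial (Fin (n - 1)) ℂ) ^ (d - 2) ∈ J := by
    have he : C (((d - 1 : ℕ) : ℂ))⁻¹ * pderiv i0 g₀ = X i0 ^ (d - 2) := by
      rw [hD0, ← map_natCast (C : ℂ →+* MvPolynomial (Fin (n - 1)) ℂ) (d - 1),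
        ← mul_assoc, ← C_mul, inv_mul_cancel₀ hcd1, C_1, one_mul]
    rw [← he]
    exact Ideal.mul_mem_left _ _ (by rw [hJ]; exact Ideal.subset_span ⟨i0, rfl⟩)
  have hJj : ∀ j : Fin (n - 1), 2 ≤ (j : ℕ) →
      (X j : MvPolynomial (Fin (n - 1)) ℂ) ^ (d - 1) ∈ J := by
    intro j hj
    have hstep : (d : MvPolynomial (Fin (n - 1)) ℂ) * X j ^ (d - 1) ∈ J := by
      have he : (d : MvPolynomial (Fin (n - 1)) ℂ) * X j ^ (d - 1)
          = pderiv j g₀ - C ((d : ℂ) * c j) * L ^ (d - 1) := by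
        rw [hD2 j hj]; ring
      rw [he]
      exact sub_mem (by rw [hJ]; exact Ideal.subset_span ⟨j, rfl⟩)
        (Ideal.mul_mem_left _ _ hJL)
    have he2 : C ((d : ℂ))⁻¹ * ((d : MvPolynomial (Fin (n - 1)) ℂ) * X j ^ (d - 1))
        = X j ^ (d - 1) := by
      rw [← map_natCast (C : ℂ →+* MvPolynomial (Fin (n - 1)) ℂ) d,
        ← mul_assoc, ← C_mul, inv_mul_cancel₀ hcd, C_1, one_mul]
    rw [← he2]
    exact Ideal.mul_mem_left _ _ hstep
  -- span equality
  have hspanEq : Ideal.span T = J := by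
    apply le_antisymm
    · rw [Ideal.span_le]
      rintro _ ⟨i, rfl⟩
      show u i ^ k i ∈ J
      by_cases h0 : (i : ℕ) = 0
      · have : i = i0 := by rw [Fin.ext_iff, hval0]; omega
        subst this
        rw [hgen0]; exact hJ0
      · by_cases h1 : (i : ℕ) = 1
        · have : i = i1 := by rw [Fin.ext_iff, hval1]; omega
          subst this
          rw [hgen1]; exact hJL
        · have h2 : 2 ≤ (i : ℕ) := by omega
          rw [hgenj i h2]; exact hJj i h2
    · rw [hJ, Ideal.span_le]
      rintro _ ⟨j, rfl⟩
      show pderiv j g₀ ∈ Ideal.span T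
      by_cases h0 : (j : ℕ) = 0
      · have : j = i0 := by rw [Fin.ext_iff, hval0]; omega
        subst this
        rw [hD0]; exact Ideal.mul_mem_left _ _ hT0
      · by_cases h1 : (j : ℕ) = 1
        · have : j = i1 := by rw [Fin.ext_iff, hval1]; omega
          subst this
          rw [hD1]; exact Ideal.mul_mem_left _ _ hT1
        · have h2 : 2 ≤ (j : ℕ) := by omega
          rw [hD2 j h2]
          exact add_mem (Ideal.mul_mem_left _ _ (hTj j h2)) (Ideal.mul_mem_left _ _ hT1)
  -- the ideal map
  have hmap : J = (Ideal.span (Set.range fun i : Fin (n - 1) =>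
      (X i : MvPolynomial (Fin (n - 1)) ℂ) ^ k i)).map
        (ψ : MvPolynomial (Fin (n - 1)) ℂ →+* MvPolynomial (Fin (n - 1)) ℂ) := by
    rw [Ideal.map_span, ← hspanEq]
    congr 1
    have hcomp : ((ψ : MvPolynomial (Fin (n - 1)) ℂ →+* MvPolynomial (Fin (n - 1)) ℂ) ∘
        fun i : Fin (n - 1) => (X i : MvPolynomial (Fin (n - 1)) ℂ) ^ k i)
        = fun i : Fin (n - 1) => u i ^ k i := by
      funext i
      show ψ (X i ^ k i) = u i ^ k i
      rw [hψ, map_pow, aeval_X]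
    rw [hT, ← Set.range_comp, hcomp]
  obtain ⟨hfin, hrank⟩ := quot_dim (m := n - 1) k
  haveI := hfin
  have e := (Ideal.quotientEquivAlg (Ideal.span (Set.range fun i : Fin (n - 1) =>
      (X i : MvPolynomial (Fin (n - 1)) ℂ) ^ k i)) J ψ hmap).toLinearEquiv
  refine ⟨e.finiteDimensional, ?_⟩
  rw [← e.finrank_eq, hrank]
  -- the product computation
  have hprod : ∏ i : Fin (n - 1), k i = (d - 2) * (d - 1) ^ (n - 2) := by
    rw [← Finset.mul_prod_erase Finset.univ k (Finset.mem_univ i0)]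
    have h1 : k i0 = d - 2 := by simp [hk, hval0]
    have h2 : ∀ j ∈ Finset.univ.erase i0, k j = d - 1 := by
      intro j hj
      have hj0 : (j : ℕ) ≠ 0 := by
        intro h
        exact (Finset.mem_erase.mp hj).1 (by rw [Fin.ext_iff, hval0, h])
      simp [hk, hj0]
    rw [Finset.prod_congr rfl h2, Finset.prod_const, h1]
    congr 1
    rw [Finset.card_erase_of_mem (Finset.mem_univ i0), Finset.card_univ, Fintype.card_fin]
    congr 1
  rw [hprod]
  have hsplit : n - 1 = (n - 2) + 1 := by omega
  rw [hsplit, pow_succ]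
  have hd2 : d - 2 = (d - 1) - 1 := by omega
  rw [hd2, Nat.sub_mul, one_mul, mul_comm]
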